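/- Proposition 5.1(2): Let E = (x_E, y_E) ∈ ℝ² and R = dist(E, A). Then exactly one of dist(E, B) < R < dist(E, C) or dist(E, C) < R < dist(E, B) holds if and only if there exist points P = (u, 0) and Q = (v, 0) on the line BC with dist(E, P) = dist(E, Q) = R, 0 < u < 1, and (v < 0 or v > 1); i.e. E lies in R₂ ∪ R₄ exactly when the circle centered at E through A meets both the open segment BC and the line BC outside the segment. -/

import Mathlib

/-- Euclidean distance between two points of the Cartesian plane `ℝ × ℝ`. -/
noncomputable def dE (P Q : ℝ × ℝ) : ℝ := Real.sqrt ((P.1 - Q.1)^2 + (P.2 - Q.2)^2)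

/-- Proposition 5.1(2): `E` is strictly closer to exactly one of `B`, `C` than to
`A` (i.e. `E ∈ R₂ ∪ R₄`) iff the circle centered at `E` through `A` meets both the
open segment `BC` and the line `BC` outside the segment. -/
theorem statement11 (xA yA : ℝ) (hyA : yA ≠ 0)
    (b c : ℝ) (hb : b = Real.sqrt ((xA - 1)^2 + yA^2))
    (hc : c = Real.sqrt (xA^2 + yA^2)) (hbc : b ≠ c)
    (E : ℝ × ℝ) (R : ℝ) (hR : R = dE E (xA, yA)) :
    ((dE E (0, 0) < R ∧ R < dE E (1, 0)) ∨ (dE E (1, 0) < R ∧ R < dE E (0, 0))) ↔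
      ∃ u v : ℝ, 0 < u ∧ u < 1 ∧ (v < 0 ∨ v > 1) ∧ dE E (u, 0) = R ∧ dE E (v, 0) = R := by
  have hR0 : 0 ≤ R := by rw [hR]; exact Real.sqrt_nonneg _
  set x := E.1 with hx
  set y := E.2 with hy
  have key : ∀ t : ℝ, dE E (t, 0) = Real.sqrt ((x - t)^2 + y^2) := by
    intro t; simp [dE]; rfl
  have hnn : ∀ t : ℝ, (0:ℝ) ≤ (x - t)^2 + y^2 := by intro t; positivity
  have keylt : ∀ t : ℝ, (dE E (t,0) < R ↔ (x - t)^2 + y^2 < R^2) := by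
    intro t
    rw [key t]
    constructor
    · intro h
      have h1 := Real.sqrt_nonneg ((x - t)^2 + y^2)
      nlinarith [Real.sq_sqrt (hnn t)]
    · intro h
      have h1 : Real.sqrt ((x - t)^2 + y^2) < Real.sqrt (R^2) :=
        Real.sqrt_lt_sqrt (hnn t) h
      rwa [Real.sqrt_sq hR0] at h1
  have keygt : ∀ t : ℝ, (R < dE E (t,0) ↔ R^2 < (x - t)^2 + y^2) := by
    intro t
    rw [key t]
    constructor
    · intro h
      nlinarith [Real.sq_sqrt (hnn t), Real.sqrt_nonneg ((x - t)^2 + y^2)]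
    · intro h
      have h1 : Real.sqrt (R^2) < Real.sqrt ((x - t)^2 + y^2) :=
        Real.sqrt_lt_sqrt (by positivity) h
      rwa [Real.sqrt_sq hR0] at h1
  have keyeq : ∀ t : ℝ, (dE E (t,0) = R ↔ (x - t)^2 + y^2 = R^2) := by
    intro t
    rw [key t]
    constructor
    · intro h
      rw [← h, Real.sq_sqrt (hnn t)]
    · intro h
      rw [h, Real.sqrt_sq hR0]
  constructor
  · rintro (⟨h1, h2⟩ | ⟨h1, h2⟩)
    · rw [keylt 0] at h1
      rw [keygt 1] at h2
      have hs0 : (0:ℝ) ≤ R^2 - y^2 := by nlinarith [sq_nonneg x]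
      set s := Real.sqrt (R^2 - y^2) with hsdef
      have hs : s^2 = R^2 - y^2 := Real.sq_sqrt hs0
      have hsn : 0 ≤ s := Real.sqrt_nonneg _
      have hxs : x^2 < s^2 := by linarith
      have habs : |x| < s := abs_lt_of_sq_lt_sq hxs hsn
      obtain ⟨hl, hr⟩ := abs_lt.mp habs
      have hu0 : 0 < x + s := by linarith
      have hv0 : x - s < 0 := by linarith
      have h2' : s^2 < (x - 1)^2 := by linarith
      have hprod : 0 < (x - 1 + s) * (x - 1 - s) := by nlinarith
      have hu1 : x + s < 1 := by nlinarith
      refine ⟨x + s, x - s, hu0, hu1, Or.inl hv0, ?_, ?_⟩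
      · rw [keyeq]; linear_combination hs
      · rw [keyeq]; linear_combination hs
    · rw [keygt 0] at h2
      rw [keylt 1] at h1
      have hs0 : (0:ℝ) ≤ R^2 - y^2 := by nlinarith [sq_nonneg (x-1)]
      set s := Real.sqrt (R^2 - y^2) with hsdef
      have hs : s^2 = R^2 - y^2 := Real.sq_sqrt hs0
      have hsn : 0 ≤ s := Real.sqrt_nonneg _
      have hxs : (x - 1)^2 < s^2 := by linarith
      have habs : |x - 1| < s := abs_lt_of_sq_lt_sq hxs hsn
      obtain ⟨hl, hr⟩ := abs_lt.mp habs
      have hv1 : 1 < x + s := by linarith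
      have hx2 : s^2 < x^2 := by linarith
      have hu0 : 0 < x - s := by nlinarith
      have hu1 : x - s < 1 := by linarith
      refine ⟨x - s, x + s, hu0, hu1, Or.inr hv1, ?_, ?_⟩
      · rw [keyeq]; linear_combination hs
      · rw [keyeq]; linear_combination hs
  · rintro ⟨u, v, hu0, hu1, hv, hdu, hdv⟩
    rw [keyeq] at hdu hdv
    have huv : u ≠ v := by
      rcases hv with h | h <;> intro e <;> rw [e] at hu0 hu1 <;> linarith
    have hsum : u + v = 2 * x := by
      have hz : (v - u) * (u + v - 2 * x) = 0 := by linear_combination hdv - hdu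
      rcases mul_eq_zero.mp hz with h' | h'
      · exact absurd (by linarith [sub_eq_zero.mp h'] : u = v) huv
      · linarith
    have hf0 : (x - 0)^2 + y^2 - R^2 = u * v := by linear_combination hdu - u * hsum
    have hf1 : (x - 1)^2 + y^2 - R^2 = (1 - u) * (1 - v) := by
      linear_combination hdu + (1 - u) * hsum
    rcases hv with h | h
    · left
      have p0 : u * v < 0 := mul_neg_of_pos_of_neg hu0 h
      have p1 : 0 < (1 - u) * (1 - v) := mul_pos (by linarith) (by linarith)
      constructor
      · rw [keylt 0]; linarith
      · rw [keygt 1]; linarith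
    · right
      have p0 : 0 < u * v := mul_pos hu0 (by linarith)
      have p1 : (1 - u) * (1 - v) < 0 := mul_neg_of_pos_of_neg (by linarith) (by linarith)
      constructor
      · rw [keylt 1]; linarith
      · rw [keygt 0]; linarith
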